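/- Let G be a gyrogroup and H an L-subgyrogroup (a subgyrogroup with gyr[a,h](H) = H for all a ∈ G, h ∈ H). Then the left cosets {a ⊕ H : a ∈ G} form a partition of G: they cover G, and any two left cosets are either equal or disjoint. Consequently, if G is finite then |H| divides |G|. -/
import Mathlib


/-- A gyrogroup: a magma with a left identity, left inverses, and
gyroautomorphisms satisfying the left gyroassociative law and the
left loop property. -/
class Gyrogroup (G : Type*) where
  add : G → G → G
  zero : G
  neg : G → G
  gyr : G → G → G → G
  zero_add : ∀ a : G, add zero a = a
  neg_add : ∀ a : G, add (neg a) a = zero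
  gyr_add : ∀ a b c d : G, gyr a b (add c d) = add (gyr a b c) (gyr a b d)
  gyr_bijective : ∀ a b : G, Function.Bijective (gyr a b)
  left_gyroassoc : ∀ a b c : G, add a (add b c) = add (add a b) (gyr a b c)
  left_loop : ∀ a b : G, gyr a b = gyr (add a b) b

open Gyrogroup

section Basic

variable {G : Type*} [Gyrogroup G]

theorem gyro_left_cancel {a b c : G} (h : add a b = add a c) : b = c := by
  have h2 : add (neg a) (add a b) = add (neg a) (add a c) := by rw [h]
  rw [left_gyroassoc, left_gyroassoc, Gyrogroup.neg_add, Gyrogroup.zero_add,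
    Gyrogroup.zero_add] at h2
  exact (gyr_bijective (neg a) a).1 h2

theorem gyro_gyr_zero_left (a c : G) : gyr zero a c = c := by
  have := left_gyroassoc zero a c
  rw [Gyrogroup.zero_add, Gyrogroup.zero_add] at this
  exact (gyro_left_cancel this).symm

theorem gyro_gyr_neg_add (a c : G) : gyr (neg a) a c = c := by
  rw [left_loop, Gyrogroup.neg_add, gyro_gyr_zero_left]

theorem gyro_neg_add_cancel_left (a b : G) : add (neg a) (add a b) = b := by
  rw [left_gyroassoc, Gyrogroup.neg_add, Gyrogroup.zero_add, gyro_gyr_neg_add]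

theorem gyro_add_neg_self (a : G) : add a (neg a) = zero := by
  have h := gyro_neg_add_cancel_left (neg a) (add a (neg a))
  rw [gyro_neg_add_cancel_left a (neg a)] at h
  calc add a (neg a) = add (neg (neg a)) (neg a) := h.symm
    _ = zero := Gyrogroup.neg_add _

theorem gyro_add_zero (a : G) : add a zero = a := by
  apply gyro_left_cancel (a := neg a)
  rw [gyro_neg_add_cancel_left, Gyrogroup.neg_add]

theorem gyro_gyr_add_neg (a c : G) : gyr a (neg a) c = c := by
  rw [left_loop, gyro_add_neg_self, gyro_gyr_zero_left]

theorem gyro_add_neg_cancel_left (a b : G) : add a (add (neg a) b) = b := by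
  rw [left_gyroassoc, gyro_add_neg_self, Gyrogroup.zero_add, gyro_gyr_add_neg]

end Basic

/-- For an L-subgyrogroup H of G, the left cosets a ⊕ H partition G:
they cover G and any two are equal or disjoint. Consequently, if G is
finite then |H| divides |G|. -/
theorem L_subgyrogroup_coset_partition {G : Type*} [Gyrogroup G] (H : Set G)
    (hne : H.Nonempty)
    (hadd : ∀ a ∈ H, ∀ b ∈ H, add a b ∈ H)
    (hneg : ∀ a ∈ H, neg a ∈ H)
    (hL : ∀ a : G, ∀ h ∈ H, gyr a h '' H = H) :
    (∀ x : G, ∃ a : G, x ∈ (fun h : G => add a h) '' H) ∧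
    (∀ a b : G, (fun h : G => add a h) '' H = (fun h : G => add b h) '' H ∨
      Disjoint ((fun h : G => add a h) '' H) ((fun h : G => add b h) '' H)) ∧
    (Finite G → H.ncard ∣ Nat.card G) := by
  obtain ⟨h0, h0H⟩ := hne
  have zero_mem : (zero : G) ∈ H := by
    have := hadd h0 h0H (neg h0) (hneg h0 h0H)
    rwa [gyro_add_neg_self] at this
  have mem_self : ∀ a : G, a ∈ (fun h : G => add a h) '' H := fun a =>
    ⟨zero, zero_mem, gyro_add_zero a⟩
  have coset_eq : ∀ a x : G, x ∈ (fun h : G => add a h) '' H →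
      (fun h : G => add a h) '' H = (fun h : G => add x h) '' H := by
    rintro a x ⟨h, hH, rfl⟩
    apply Set.Subset.antisymm
    · rintro y ⟨k', hk', rfl⟩
      refine ⟨gyr a h (add (neg h) k'), ?_, ?_⟩
      · rw [← hL a h hH]
        exact ⟨add (neg h) k', hadd _ (hneg h hH) _ hk', rfl⟩
      · show add (add a h) (gyr a h (add (neg h) k')) = add a k'
        rw [← left_gyroassoc, gyro_add_neg_cancel_left]
    · rintro y ⟨m, hm, rfl⟩
      rw [← hL a h hH] at hm
      obtain ⟨k, hk, rfl⟩ := hm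
      refine ⟨add h k, hadd h hH k hk, ?_⟩
      show add a (add h k) = add (add a h) (gyr a h k)
      exact left_gyroassoc a h k
  refine ⟨fun x => ⟨x, mem_self x⟩, ?_, ?_⟩
  · intro a b
    by_cases hd : Disjoint ((fun h : G => add a h) '' H) ((fun h : G => add b h) '' H)
    · exact Or.inr hd
    · left
      obtain ⟨x, hxa, hxb⟩ := Set.not_disjoint_iff.mp hd
      rw [coset_eq a x hxa, coset_eq b x hxb]
  · intro hfin
    let s : Setoid G := ⟨fun x y => x ∈ (fun h : G => add y h) '' H, by
      refine ⟨mem_self, ?_, ?_⟩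
      · intro x y hxy
        rw [← coset_eq y x hxy]; exact mem_self y
      · intro x y z hxy hyz
        rwa [coset_eq z y hyz]⟩
    have fiber_equiv : ∀ q : Quotient s, H ≃ {x : G // Quotient.mk s x = q} := by
      intro q
      set a := Quotient.out q with ha
      have hq : Quotient.mk s a = q := Quotient.out_eq q
      refine ⟨fun h => ⟨add a h.1, ?_⟩, fun x => ⟨add (neg a) x.1, ?_⟩, ?_, ?_⟩
      · rw [← hq]
        apply Quotient.sound
        exact ⟨h.1, h.2, rfl⟩
      · have hx : x.1 ∈ (fun h : G => add a h) '' H :=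
          Quotient.exact (x.2.trans hq.symm)
        obtain ⟨h, hH, he⟩ := hx
        have : add (neg a) x.1 = h := by
          rw [← he]; exact gyro_neg_add_cancel_left a h
        rw [this]; exact hH
      · intro h
        apply Subtype.ext
        exact gyro_neg_add_cancel_left a h.1
      · intro x
        apply Subtype.ext
        exact gyro_add_neg_cancel_left a x.1
    have e : G ≃ (Quotient s) × H :=
      (Equiv.sigmaFiberEquiv (Quotient.mk s)).symm.trans
        ((Equiv.sigmaCongrRight (fun q => (fiber_equiv q).symm)).trans
          (Equiv.sigmaEquivProd _ _))
    have hcard : Nat.card G = Nat.card (Quotient s) * Nat.card H := by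
      rw [Nat.card_congr e, Nat.card_prod]
    rw [hcard, ← Nat.card_coe_set_eq]
    exact Dvd.intro_left _ rfl
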